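/- Let p, q be integers with 1 ≤ p < q and assume p divides q. For every Britton-reduced valley word v there exist a standard valley V and an integer γ ∈ ℤ such that v and the concatenation V a^γ represent the same element of BS(p,q); moreover the word V a^γ is again Britton-reduced. -/

import Mathlib

inductive Letter : Type
  | a | A | t | T
  deriving DecidableEq

def bsRel (p q : ℤ) : Set (FreeGroup Bool) :=
  {FreeGroup.of true * (FreeGroup.of false) ^ p * (FreeGroup.of true)⁻¹ * (FreeGroup.of false) ^ (-q)}

abbrev BS (p q : ℤ) := PresentedGroup (bsRel p q)

def evalLetter (p q : ℤ) : Letter → BS p q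
  | .a => PresentedGroup.of false
  | .A => (PresentedGroup.of false)⁻¹
  | .t => PresentedGroup.of true
  | .T => (PresentedGroup.of true)⁻¹

def eval (p q : ℤ) (w : List Letter) : BS p q := (w.map (evalLetter p q)).prod

def aPow (α : ℤ) : List Letter :=
  if 0 ≤ α then List.replicate α.toNat Letter.a else List.replicate (-α).toNat Letter.A

def Geodesic (p q : ℤ) (w : List Letter) : Prop :=
  ∀ v : List Letter, eval p q v = eval p q w → w.length ≤ v.length

/-- Ranking of letters in the order `t < T < a < A`. -/
def letterIdx : Letter → ℕ
  | .t => 0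
  | .T => 1
  | .a => 2
  | .A => 3

/-- Length-lexicographical strict order on words, with letters ordered `t < T < a < A`. -/
def llLt (u v : List Letter) : Prop :=
  u.length < v.length ∨
    (u.length = v.length ∧ List.Lex (· < ·) (u.map letterIdx) (v.map letterIdx))

/-- `IsLlnf p q v w` : `v` is the length-lexicographical normal form of `w`,
i.e. `v` represents the same element as `w` and no word representing this element
precedes `v` in the length-lexicographical order. -/
def IsLlnf (p q : ℤ) (v w : List Letter) : Prop :=
  eval p q v = eval p q w ∧ ∀ u : List Letter, eval p q u = eval p q w → ¬ llLt u v

/-- A word contains no factors `a a⁻¹` or `a⁻¹ a`. -/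
def Reduced (w : List Letter) : Prop :=
  (∀ u v : List Letter, w ≠ u ++ [Letter.a, Letter.A] ++ v) ∧
  (∀ u v : List Letter, w ≠ u ++ [Letter.A, Letter.a] ++ v)

/-- A word is Britton-reduced: it has no factors `a a⁻¹`, `a⁻¹ a`,
`t a^{pμ} t⁻¹` or `t⁻¹ a^{qμ} t` (with `μ ∈ ℤ`). -/
def BrittonReduced (p q : ℤ) (w : List Letter) : Prop :=
  Reduced w ∧
  (∀ u v : List Letter, ∀ μ : ℤ, w ≠ u ++ [Letter.t] ++ aPow (p * μ) ++ [Letter.T] ++ v) ∧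
  (∀ u v : List Letter, ∀ μ : ℤ, w ≠ u ++ [Letter.T] ++ aPow (q * μ) ++ [Letter.t] ++ v)

/-- The t-sequence of a word: its subsequence of letters from `{t, t⁻¹}`. -/
def tSeq (w : List Letter) : List Letter :=
  w.filter (fun c => c == Letter.t || c == Letter.T)

/-- The geodesic length of a group element: the least length of a word representing it. -/
noncomputable def geodesicLength (p q : ℤ) (g : BS p q) : ℕ :=
  sInf {n : ℕ | ∃ w : List Letter, eval p q w = g ∧ w.length = n}

/-- A valley: every prefix has height `≤ 0` and the total height is `0`,
where the height of a prefix is (number of `t`'s) − (number of `t⁻¹`'s). -/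
def IsValley (w : List Letter) : Prop :=
  (∀ u v : List Letter, w = u ++ v → u.count Letter.t ≤ u.count Letter.T) ∧
  w.count Letter.t = w.count Letter.T


/-- A standard valley: a Britton-reduced valley of the form
`a^{α_1} θ_1 ⋯ a^{α_k} θ_k` with `|α_i| < q` for all `i` and `|α_i| < p` whenever
`θ_i = t⁻¹`. -/
def IsStandardValley (p q : ℤ) (V : List Letter) : Prop :=
  BrittonReduced p q V ∧ IsValley V ∧
  ∃ (k : ℕ) (αs : Fin k → ℤ) (θs : Fin k → Letter),
    (∀ i, θs i = Letter.t ∨ θs i = Letter.T) ∧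
    V = (List.ofFn fun i : Fin k => aPow (αs i) ++ [θs i]).flatten ∧
    (∀ i, |αs i| < q) ∧ (∀ i, θs i = Letter.T → |αs i| < p)


-- aPow lemmas
lemma aPow_zero : aPow 0 = [] := by simp [aPow]

lemma mem_aPow {c : Letter} {α : ℤ} (h : c ∈ aPow α) : c = .a ∨ c = .A := by
  unfold aPow at h
  split at h
  · exact Or.inl (List.eq_of_mem_replicate h)
  · exact Or.inr (List.eq_of_mem_replicate h)

lemma aPow_length (α : ℤ) : (aPow α).length = α.natAbs := by
  unfold aPow; split <;> simp <;> omega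

lemma aPow_pos_head {α : ℤ} (h : 0 < α) : aPow α = .a :: aPow (α - 1) := by
  unfold aPow
  rw [if_pos (by omega), if_pos (by omega)]
  have : α.toNat = (α - 1).toNat + 1 := by omega
  rw [this, List.replicate_succ]

lemma aPow_neg_head {α : ℤ} (h : α < 0) : aPow α = .A :: aPow (α + 1) := by
  unfold aPow
  rw [if_neg (by omega)]
  by_cases h1 : α + 1 = 0
  · rw [if_pos (by omega)]
    have : (-α).toNat = 1 := by omega
    simp [this, h1]
  · rw [if_neg (by omega)]
    have : (-α).toNat = (-(α+1)).toNat + 1 := by omega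
    rw [this, List.replicate_succ]

lemma aPow_inj {α β : ℤ} (h : aPow α = aPow β) : α = β := by
  rcases lt_trichotomy α 0 with hα | hα | hα
  · rcases lt_trichotomy β 0 with hβ | hβ | hβ
    · have := congrArg List.length h
      rw [aPow_length, aPow_length] at this
      omega
    · subst hβ; rw [aPow_zero] at h
      rw [aPow_neg_head hα] at h; simp at h
    · rw [aPow_neg_head hα, aPow_pos_head hβ] at h
      simp at h
  · subst hα
    rcases lt_trichotomy β 0 with hβ | hβ | hβ
    · rw [aPow_zero, aPow_neg_head hβ] at h; simp at h
    · omega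
    · rw [aPow_zero, aPow_pos_head hβ] at h; simp at h
  · rcases lt_trichotomy β 0 with hβ | hβ | hβ
    · rw [aPow_pos_head hα, aPow_neg_head hβ] at h; simp at h
    · subst hβ; rw [aPow_zero, aPow_pos_head hα] at h; simp at h
    · have := congrArg List.length h
      rw [aPow_length, aPow_length] at this
      omega

-- eval lemmas
lemma eval_append (p q : ℤ) (u v : List Letter) :
    eval p q (u ++ v) = eval p q u * eval p q v := by
  simp [eval]

lemma eval_aPow (p q α : ℤ) :
    eval p q (aPow α) = (PresentedGroup.of false : BS p q) ^ α := by
  unfold aPow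
  split
  · rw [eval, List.map_replicate, List.prod_replicate, ← zpow_natCast, Int.toNat_of_nonneg ‹_›]
    rfl
  · rw [eval, List.map_replicate, List.prod_replicate]
    show ((PresentedGroup.of false : BS p q)⁻¹) ^ (-α).toNat = _
    rw [inv_pow, ← zpow_natCast, Int.toNat_of_nonneg (by omega), ← zpow_neg, neg_neg]

lemma key_rel (p q : ℤ) :
    (PresentedGroup.of true : BS p q) * (PresentedGroup.of false) ^ p *
      (PresentedGroup.of true)⁻¹ = (PresentedGroup.of false) ^ q := by
  have h : (QuotientGroup.mk (FreeGroup.of true * (FreeGroup.of false) ^ p *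
      (FreeGroup.of true)⁻¹ * (FreeGroup.of false) ^ (-q)) : BS p q) = 1 :=
    (QuotientGroup.eq_one_iff _).2 (Subgroup.subset_normalClosure rfl)
  have h2 : (PresentedGroup.of true : BS p q) * (PresentedGroup.of false) ^ p *
      (PresentedGroup.of true)⁻¹ * ((PresentedGroup.of false) ^ q)⁻¹ = 1 := by
    rw [← zpow_neg]
    have h' := PresentedGroup.one_of_mem (rels := bsRel p q) (x := FreeGroup.of true *
      (FreeGroup.of false) ^ p * (FreeGroup.of true)⁻¹ * (FreeGroup.of false) ^ (-q)) rfl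
    simpa [PresentedGroup.of, map_mul, map_inv, map_zpow] using h'
  exact mul_inv_eq_one.mp h2

lemma rel_t (p q s : ℤ) :
    (PresentedGroup.of false : BS p q) ^ (q * s) * (PresentedGroup.of true) =
      (PresentedGroup.of true) * (PresentedGroup.of false) ^ (p * s) := by
  have h : (PresentedGroup.of true : BS p q) * (PresentedGroup.of false) ^ (p * s) *
      (PresentedGroup.of true)⁻¹ = (PresentedGroup.of false) ^ (q * s) := by
    rw [zpow_mul, zpow_mul, ← conj_zpow, key_rel]
  rw [← h]; group

lemma rel_T (p q s : ℤ) :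
    (PresentedGroup.of false : BS p q) ^ (p * s) * (PresentedGroup.of true)⁻¹ =
      (PresentedGroup.of true)⁻¹ * (PresentedGroup.of false) ^ (q * s) := by
  have h : (PresentedGroup.of true : BS p q) * (PresentedGroup.of false) ^ (p * s) *
      (PresentedGroup.of true)⁻¹ = (PresentedGroup.of false) ^ (q * s) := by
    rw [zpow_mul, zpow_mul, ← conj_zpow, key_rel]
  rw [← h]; group

-- Blocks
def tl (b : Bool) : Letter := if b then .t else .T

def blk (x : ℤ × Bool) : List Letter := aPow x.1 ++ [tl x.2]

def blocksW (bs : List (ℤ × Bool)) : List Letter := (bs.map blk).flatten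

def toW (bs : List (ℤ × Bool)) (γ : ℤ) : List Letter := blocksW bs ++ aPow γ

lemma blocksW_nil : blocksW [] = [] := rfl

lemma blocksW_cons (x bs) : blocksW (x :: bs) = aPow x.1 ++ [tl x.2] ++ blocksW bs := by
  simp [blocksW, blk]

lemma blocksW_append (bs₁ bs₂) : blocksW (bs₁ ++ bs₂) = blocksW bs₁ ++ blocksW bs₂ := by
  simp [blocksW]

def θval (p q : ℤ) (b : Bool) : BS p q :=
  if b then PresentedGroup.of true else (PresentedGroup.of true)⁻¹

lemma θval_true (p q : ℤ) : θval p q true = (PresentedGroup.of true : BS p q) := rfl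
lemma θval_false (p q : ℤ) : θval p q false = ((PresentedGroup.of true : BS p q))⁻¹ := rfl

lemma eval_blocksW_cons (p q : ℤ) (x bs) :
    eval p q (blocksW (x :: bs)) =
      (PresentedGroup.of false : BS p q) ^ x.1 * θval p q x.2 * eval p q (blocksW bs) := by
  rw [blocksW_cons, eval_append, eval_append, eval_aPow]
  congr 1
  cases x.2 <;> simp [eval, tl, θval, evalLetter]

-- Normalization
def normB (p q : ℤ) : List (ℤ × Bool) → ℤ → List (ℤ × Bool) × ℤ
  | [], c => ([], c)
  | (α, b) :: bs, c =>
    let m : ℤ := if b then q else p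
    let m' : ℤ := if b then p else q
    let res := normB p q bs (m' * ((c + α) / m))
    (((c + α) % m, b) :: res.1, res.2)

lemma eval_normB (p q : ℤ) (hp : 1 ≤ p) (hpq : p < q) :
    ∀ (bs : List (ℤ × Bool)) (c : ℤ),
      (PresentedGroup.of false : BS p q) ^ c * eval p q (blocksW bs) =
        eval p q (blocksW (normB p q bs c).1) *
          (PresentedGroup.of false : BS p q) ^ (normB p q bs c).2 := by
  intro bs
  induction bs with
  | nil => intro c; simp [normB, blocksW, eval]
  | cons x bs ih =>
    obtain ⟨α, b⟩ := x
    intro c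
    cases b
    · -- b = false : θ = T, modulus p, carry q * s
      have hkey : (c + α) = p * ((c + α) / p) + (c + α) % p := (Int.mul_ediv_add_emod _ _).symm
      rw [show normB p q ((α, false) :: bs) c =
        (((c + α) % p, false) :: (normB p q bs (q * ((c + α) / p))).1,
          (normB p q bs (q * ((c + α) / p))).2) from rfl]
      rw [eval_blocksW_cons, eval_blocksW_cons]
      have : (PresentedGroup.of false : BS p q) ^ c *
          ((PresentedGroup.of false : BS p q) ^ α * θval p q false * eval p q (blocksW bs)) =
          (PresentedGroup.of false : BS p q) ^ ((c+α) % p) *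
            ((PresentedGroup.of false : BS p q) ^ (p * ((c+α)/p)) * θval p q false) *
            eval p q (blocksW bs) := by
        rw [show (PresentedGroup.of false : BS p q) ^ ((c+α) % p) *
            ((PresentedGroup.of false : BS p q) ^ (p * ((c+α)/p)) * θval p q false) =
            (PresentedGroup.of false : BS p q) ^ ((c+α) % p + p * ((c+α)/p)) * θval p q false by
          rw [zpow_add]; group]
        rw [Int.emod_add_mul_ediv]
        rw [zpow_add]; group
      rw [this, θval_false, rel_T p q ((c+α)/p), mul_assoc, mul_assoc, ih (q * ((c + α) / p))]
      simp [mul_assoc]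
    · -- b = true : θ = t, modulus q, carry p * s
      rw [show normB p q ((α, true) :: bs) c =
        (((c + α) % q, true) :: (normB p q bs (p * ((c + α) / q))).1,
          (normB p q bs (p * ((c + α) / q))).2) from rfl]
      rw [eval_blocksW_cons, eval_blocksW_cons]
      have : (PresentedGroup.of false : BS p q) ^ c *
          ((PresentedGroup.of false : BS p q) ^ α * θval p q true * eval p q (blocksW bs)) =
          (PresentedGroup.of false : BS p q) ^ ((c+α) % q) *
            ((PresentedGroup.of false : BS p q) ^ (q * ((c+α)/q)) * θval p q true) *
            eval p q (blocksW bs) := by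
        rw [show (PresentedGroup.of false : BS p q) ^ ((c+α) % q) *
            ((PresentedGroup.of false : BS p q) ^ (q * ((c+α)/q)) * θval p q true) =
            (PresentedGroup.of false : BS p q) ^ ((c+α) % q + q * ((c+α)/q)) * θval p q true by
          rw [zpow_add]; group]
        rw [Int.emod_add_mul_ediv]
        rw [zpow_add]; group
      rw [this, θval_true, rel_t p q ((c+α)/q), mul_assoc, mul_assoc, ih (p * ((c + α) / q))]
      simp [mul_assoc]

-- Chain condition
def Adj (p q : ℤ) (b : Bool) (y : ℤ × Bool) : Prop :=
  (b = true → y.2 = false → ¬ p ∣ y.1) ∧ (b = false → y.2 = true → ¬ q ∣ y.1)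

def ChainOK (p q : ℤ) : Option Bool → List (ℤ × Bool) → Prop
  | _, [] => True
  | prev, y :: bs => (∀ b, prev = some b → Adj p q b y) ∧ ChainOK p q (some y.2) bs

lemma chainOK_some_intro (p q : ℤ) :
    ∀ (bs : List (ℤ × Bool)) (x : ℤ × Bool),
      (∀ bs₁ y z bs₂, x :: bs = bs₁ ++ y :: z :: bs₂ → Adj p q y.2 z) →
      ChainOK p q (some x.2) bs := by
  intro bs
  induction bs with
  | nil => intro x _; trivial
  | cons y bs ih =>
    intro x h
    refine ⟨fun b hb => ?_, ih y (fun bs₁ z w bs₂ hsp => h (x :: bs₁) z w bs₂ (by rw [hsp]; rfl))⟩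
    have := h [] x y bs rfl
    cases hb; exact this

lemma chainOK_none_intro (p q : ℤ) (bs : List (ℤ × Bool))
    (h : ∀ bs₁ x y bs₂, bs = bs₁ ++ x :: y :: bs₂ → Adj p q x.2 y) :
    ChainOK p q none bs := by
  cases bs with
  | nil => trivial
  | cons x bs => exact ⟨fun b hb => (nomatch hb), chainOK_some_intro p q bs x h⟩

lemma chainOK_adj (p q : ℤ) :
    ∀ (bs₁ : List (ℤ × Bool)) (prev : Option Bool) (x y : ℤ × Bool) (bs₂ : List (ℤ × Bool)),
      ChainOK p q prev (bs₁ ++ x :: y :: bs₂) → Adj p q x.2 y := by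
  intro bs₁
  induction bs₁ with
  | nil => intro prev x y bs₂ h; exact h.2.1 x.2 rfl
  | cons z bs₁ ih => intro prev x y bs₂ h; exact ih (some z.2) x y bs₂ h.2

lemma dvd_emod_add_iff {d c α : ℤ} (hd : d ≠ 0) (hc : d ∣ c) : d ∣ (c + α) % d ↔ d ∣ α := by
  rw [Int.dvd_iff_emod_eq_zero, Int.emod_emod_of_dvd _ (dvd_refl d),
    ← Int.dvd_iff_emod_eq_zero, dvd_add_right hc]

lemma normB_chainOK (p q : ℤ) (hp : 1 ≤ p) (hpq : p < q) (hdvd : p ∣ q) :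
    ∀ (bs : List (ℤ × Bool)) (c : ℤ) (prev : Option Bool),
      (prev = some true → p ∣ c) → (prev = some false → q ∣ c) →
      ChainOK p q prev bs → ChainOK p q prev (normB p q bs c).1 := by
  intro bs
  induction bs with
  | nil => intro c prev _ _ _; trivial
  | cons x bs ih =>
    obtain ⟨α, b⟩ := x
    intro c prev hc1 hc2 hch
    cases b with
    | false =>
      rw [show (normB p q ((α, false) :: bs) c).1 =
        ((c+α) % p, false) :: (normB p q bs (q * ((c+α)/p))).1 from rfl]
      refine ⟨fun b' hb' => ?_, ?_⟩
      · have hadj := hch.1 b' hb'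
        cases b' with
        | false => exact ⟨by simp, by simp⟩
        | true =>
          refine ⟨fun _ _ hdv => hadj.1 rfl rfl ?_, by simp⟩
          exact (dvd_emod_add_iff (show p ≠ 0 by omega) (hc1 hb')).mp hdv
      · exact ih _ (some false) (fun h => by cases h) (fun _ => Dvd.intro _ rfl) hch.2
    | true =>
      rw [show (normB p q ((α, true) :: bs) c).1 =
        ((c+α) % q, true) :: (normB p q bs (p * ((c+α)/q))).1 from rfl]
      refine ⟨fun b' hb' => ?_, ?_⟩
      · have hadj := hch.1 b' hb'
        cases b' with
        | true => exact ⟨by simp, by simp⟩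
        | false =>
          refine ⟨by simp, fun _ _ hdv => hadj.2 rfl rfl ?_⟩
          exact (dvd_emod_add_iff (show q ≠ 0 by omega) (hc2 hb')).mp hdv
      · exact ih _ (some true) (fun _ => Dvd.intro _ rfl) (fun h => by cases h) hch.2

lemma normB_snd (p q : ℤ) :
    ∀ (bs : List (ℤ × Bool)) (c : ℤ),
      (normB p q bs c).1.map Prod.snd = bs.map Prod.snd := by
  intro bs
  induction bs with
  | nil => intro c; rfl
  | cons x bs ih => obtain ⟨α, b⟩ := x; intro c; simpa [normB] using ih _

lemma normB_bounds (p q : ℤ) (hp : 1 ≤ p) (hpq : p < q) :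
    ∀ (bs : List (ℤ × Bool)) (c : ℤ),
      ∀ x ∈ (normB p q bs c).1, 0 ≤ x.1 ∧ x.1 < q ∧ (x.2 = false → x.1 < p) := by
  intro bs
  induction bs with
  | nil => intro c x hx; simp [normB] at hx
  | cons y bs ih =>
    obtain ⟨α, b⟩ := y
    intro c x hx
    cases b with
    | false =>
      rw [show (normB p q ((α, false) :: bs) c).1 =
        ((c+α) % p, false) :: (normB p q bs (q * ((c+α)/p))).1 from rfl] at hx
      rcases List.mem_cons.mp hx with rfl | hx
      · have h1 := Int.emod_nonneg (c+α) (show p ≠ 0 by omega)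
        have h2 := Int.emod_lt_of_pos (c+α) (show (0:ℤ) < p by omega)
        exact ⟨h1, by omega, fun _ => h2⟩
      · exact ih _ x hx
    | true =>
      rw [show (normB p q ((α, true) :: bs) c).1 =
        ((c+α) % q, true) :: (normB p q bs (p * ((c+α)/q))).1 from rfl] at hx
      rcases List.mem_cons.mp hx with rfl | hx
      · have h1 := Int.emod_nonneg (c+α) (show q ≠ 0 by omega)
        have h2 := Int.emod_lt_of_pos (c+α) (show (0:ℤ) < q by omega)
        exact ⟨h1, h2, fun h => by simp at h⟩
      · exact ih _ x hx

-- letter facts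
lemma tl_not_a (b : Bool) : tl b ≠ Letter.a := by cases b <;> simp [tl]
lemma tl_not_A (b : Bool) : tl b ≠ Letter.A := by cases b <;> simp [tl]
lemma tl_inj {b b' : Bool} (h : tl b = tl b') : b = b' := by
  cases b <;> cases b' <;> simp_all [tl]

lemma not_aA_tl {c : Letter} (h : c = Letter.a ∨ c = Letter.A) (b : Bool) : tl b ≠ c := by
  rcases h with rfl | rfl
  · exact tl_not_a b
  · exact tl_not_A b

lemma tl_not_mem_aPow (b : Bool) (α : ℤ) : tl b ∉ aPow α := by
  intro h
  exact not_aA_tl (mem_aPow h) b rfl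

lemma aPow_mem_eq {c d : Letter} {α : ℤ} (hc : c ∈ aPow α) (hd : d ∈ aPow α) : c = d := by
  unfold aPow at hc hd
  by_cases h : 0 ≤ α
  · rw [if_pos h] at hc hd
    rw [List.eq_of_mem_replicate hc, List.eq_of_mem_replicate hd]
  · rw [if_neg h] at hc hd
    rw [List.eq_of_mem_replicate hc, List.eq_of_mem_replicate hd]

lemma toW_nil (γ : ℤ) : toW [] γ = aPow γ := by simp [toW, blocksW]

lemma toW_cons (x : ℤ × Bool) (bs : List (ℤ × Bool)) (γ : ℤ) :
    toW (x :: bs) γ = aPow x.1 ++ ([tl x.2] ++ toW bs γ) := by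
  simp [toW, blocksW, blk]

lemma cons_inj' {α : Type*} {x y : α} {l₁ l₂ : List α} (h : x :: l₁ = y :: l₂) :
    x = y ∧ l₁ = l₂ := by
  simpa using h

-- prefix inversion
lemma toW_prefix_inv (γ : ℤ) (bs : List (ℤ × Bool)) (m w : List Letter) (b' : Bool)
    (hm : ∀ c ∈ m, c = Letter.a ∨ c = Letter.A)
    (h : toW bs γ = m ++ [tl b'] ++ w) :
    ∃ α bs₂, bs = (α, b') :: bs₂ ∧ m = aPow α := by
  cases bs with
  | nil =>
    exfalso
    apply tl_not_mem_aPow b' γ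
    rw [← toW_nil γ, h]
    simp
  | cons x bs₂ =>
    obtain ⟨α₁, b₁⟩ := x
    rw [toW_cons] at h
    simp only at h
    rw [show m ++ [tl b'] ++ w = m ++ ([tl b'] ++ w) by simp] at h
    rcases List.append_eq_append_iff.mp h with ⟨a', hm', ha'⟩ | ⟨c', hc', hw'⟩
    · cases a' with
      | nil =>
        simp only [List.append_nil] at hm'
        simp only [List.nil_append, List.singleton_append] at ha'
        obtain ⟨h1, _⟩ := cons_inj' ha'
        exact ⟨α₁, bs₂, by rw [tl_inj h1], hm'⟩
      | cons c a'' =>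
        exfalso
        simp only [List.singleton_append] at ha'
        obtain ⟨h1, _⟩ := cons_inj' ha'
        have : c ∈ m := by rw [hm']; simp
        exact not_aA_tl (hm c this) b₁ h1
    · cases c' with
      | nil =>
        simp only [List.append_nil] at hc'
        simp only [List.nil_append, List.singleton_append] at hw'
        obtain ⟨h1, _⟩ := cons_inj' hw'
        exact ⟨α₁, bs₂, by rw [tl_inj h1.symm], hc'.symm⟩
      | cons d c'' =>
        exfalso
        simp only [List.singleton_append] at hw'
        obtain ⟨h1, _⟩ := cons_inj' hw'
        have : d ∈ aPow α₁ := by rw [hc']; simp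
        exact tl_not_mem_aPow b' α₁ (h1 ▸ this)

-- factor inversion
lemma toW_factor_inv (γ : ℤ) :
    ∀ (bs : List (ℤ × Bool)) (u m w : List Letter) (b b' : Bool),
      (∀ c ∈ m, c = Letter.a ∨ c = Letter.A) →
      toW bs γ = u ++ [tl b] ++ m ++ [tl b'] ++ w →
      ∃ bs₁ β α bs₂, bs = bs₁ ++ (β, b) :: (α, b') :: bs₂ ∧ m = aPow α := by
  intro bs
  induction bs with
  | nil =>
    intro u m w b b' hm h
    exfalso
    apply tl_not_mem_aPow b γ
    rw [← toW_nil γ, h]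
    simp
  | cons x bs' ih =>
    intro u m w b b' hm h
    obtain ⟨α₀, b₀⟩ := x
    rw [toW_cons] at h
    simp only at h
    rw [show u ++ [tl b] ++ m ++ [tl b'] ++ w
        = u ++ ([tl b] ++ (m ++ ([tl b'] ++ w))) by simp] at h
    rcases List.append_eq_append_iff.mp h with ⟨a', hu', ha'⟩ | ⟨c', hc', hw'⟩
    · cases a' with
      | nil =>
        simp only [List.nil_append, List.singleton_append] at ha'
        obtain ⟨h1, h2⟩ := cons_inj' ha'
        have hR : toW bs' γ = m ++ [tl b'] ++ w := by rw [h2]; simp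
        obtain ⟨α, bs₂, hbs, hma⟩ := toW_prefix_inv γ bs' m w b' hm hR
        exact ⟨[], α₀, α, bs₂, by rw [hbs, tl_inj h1]; rfl, hma⟩
      | cons c a'' =>
        simp only [List.singleton_append] at ha'
        obtain ⟨h1, h2⟩ := cons_inj' ha'
        have hR : toW bs' γ = a'' ++ [tl b] ++ m ++ [tl b'] ++ w := by rw [h2]; simp
        obtain ⟨bs₁, β, α, bs₂, hbs, hma⟩ := ih a'' m w b b' hm hR
        exact ⟨(α₀, b₀) :: bs₁, β, α, bs₂, by rw [hbs]; rfl, hma⟩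
    · cases c' with
      | nil =>
        simp only [List.append_nil] at hc'
        simp only [List.nil_append, List.singleton_append] at hw'
        obtain ⟨h1, h2⟩ := cons_inj' hw'
        have hR : toW bs' γ = m ++ [tl b'] ++ w := by rw [← h2]; simp
        obtain ⟨α, bs₂, hbs, hma⟩ := toW_prefix_inv γ bs' m w b' hm hR
        exact ⟨[], α₀, α, bs₂, by rw [hbs, tl_inj h1.symm]; rfl, hma⟩
      | cons d c'' =>
        exfalso
        simp only [List.singleton_append] at hw'
        obtain ⟨h1, _⟩ := cons_inj' hw'
        have : d ∈ aPow α₀ := by rw [hc']; simp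
        exact tl_not_mem_aPow b α₀ (h1 ▸ this)

-- no aA / Aa factors
lemma toW_no_bad_pair (γ : ℤ) :
    ∀ (bs : List (ℤ × Bool)) (u w : List Letter) (x y : Letter),
      x ≠ y → (x = Letter.a ∨ x = Letter.A) → (y = Letter.a ∨ y = Letter.A) →
      toW bs γ ≠ u ++ [x, y] ++ w := by
  intro bs
  induction bs with
  | nil =>
    intro u w x y hxy hx hy h
    rw [toW_nil] at h
    apply hxy
    have hxm : x ∈ aPow γ := by rw [h]; simp
    have hym : y ∈ aPow γ := by rw [h]; simp
    exact aPow_mem_eq hxm hym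
  | cons z bs' ih =>
    intro u w x y hxy hx hy h
    obtain ⟨α₀, b₀⟩ := z
    rw [toW_cons] at h
    simp only at h
    rw [show u ++ [x, y] ++ w = u ++ (x :: y :: w) by simp] at h
    rcases List.append_eq_append_iff.mp h with ⟨a', hu', ha'⟩ | ⟨c', hc', hw'⟩
    · cases a' with
      | nil =>
        simp only [List.nil_append, List.singleton_append] at ha'
        obtain ⟨h1, _⟩ := cons_inj' ha'
        exact not_aA_tl hx b₀ h1
      | cons c a'' =>
        simp only [List.singleton_append] at ha'
        obtain ⟨h1, h2⟩ := cons_inj' ha'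
        exact ih a'' w x y hxy hx hy (by rw [h2]; simp)
    · cases c' with
      | nil =>
        simp only [List.nil_append, List.singleton_append] at hw'
        obtain ⟨h1, _⟩ := cons_inj' hw'
        exact not_aA_tl hx b₀ h1.symm
      | cons d c'' =>
        cases c'' with
        | nil =>
          simp only [List.singleton_append, List.cons_append, List.nil_append] at hw'
          obtain ⟨h1, h2⟩ := cons_inj' hw'
          obtain ⟨h3, _⟩ := cons_inj' h2
          exact not_aA_tl hy b₀ h3.symm
        | cons e c''' =>
          apply hxy
          simp only [List.cons_append] at hw'
          obtain ⟨h1, h2⟩ := cons_inj' hw'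
          obtain ⟨h3, _⟩ := cons_inj' h2
          have hdm : d ∈ aPow α₀ := by rw [hc']; simp
          have hem : e ∈ aPow α₀ := by rw [hc']; simp
          rw [h1, h3]
          exact aPow_mem_eq hdm hem

-- Britton reducedness of toW
lemma brittonReduced_toW (p q : ℤ) (bs : List (ℤ × Bool)) (γ : ℤ)
    (hch : ChainOK p q none bs) : BrittonReduced p q (toW bs γ) := by
  refine ⟨⟨fun u v h => toW_no_bad_pair γ bs u v .a .A (by simp) (Or.inl rfl) (Or.inr rfl) h,
    fun u v h => toW_no_bad_pair γ bs u v .A .a (by simp) (Or.inr rfl) (Or.inl rfl) h⟩, ?_, ?_⟩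
  · intro u v μ h
    obtain ⟨bs₁, β, α, bs₂, hbs, hma⟩ :=
      toW_factor_inv γ bs u (aPow (p * μ)) v true false (fun c hc => mem_aPow hc) h
    have hadj := chainOK_adj p q bs₁ none (β, true) (α, false) bs₂ (hbs ▸ hch)
    exact hadj.1 rfl rfl ⟨μ, (aPow_inj hma).symm⟩
  · intro u v μ h
    obtain ⟨bs₁, β, α, bs₂, hbs, hma⟩ :=
      toW_factor_inv γ bs u (aPow (q * μ)) v false true (fun c hc => mem_aPow hc) h
    have hadj := chainOK_adj p q bs₁ none (β, false) (α, true) bs₂ (hbs ▸ hch)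
    exact hadj.2 rfl rfl ⟨μ, (aPow_inj hma).symm⟩

-- Britton reducedness is closed under taking prefixes
lemma brittonReduced_of_append (p q : ℤ) (x y : List Letter)
    (h : BrittonReduced p q (x ++ y)) : BrittonReduced p q x := by
  obtain ⟨⟨h1, h2⟩, h3, h4⟩ := h
  refine ⟨⟨fun u v hx => h1 u (v ++ y) ?_, fun u v hx => h2 u (v ++ y) ?_⟩,
    fun u v μ hx => h3 u (v ++ y) μ ?_, fun u v μ hx => h4 u (v ++ y) μ ?_⟩ <;>
    rw [hx] <;> simp

-- tSeq lemmas
lemma tSeq_append (u v : List Letter) : tSeq (u ++ v) = tSeq u ++ tSeq v :=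
  List.filter_append _ _

lemma tSeq_aPow (α : ℤ) : tSeq (aPow α) = [] := by
  rw [tSeq, List.filter_eq_nil_iff]
  intro c hc
  rcases mem_aPow hc with rfl | rfl <;> decide

lemma tSeq_tl (b : Bool) : tSeq [tl b] = [tl b] := by cases b <;> decide

lemma tSeq_toW (bs : List (ℤ × Bool)) (γ : ℤ) :
    tSeq (toW bs γ) = bs.map (fun x => tl x.2) := by
  induction bs with
  | nil => rw [toW_nil, tSeq_aPow]; rfl
  | cons x bs ih =>
    rw [toW_cons, tSeq_append, tSeq_append, tSeq_aPow, tSeq_tl, ih]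
    rfl

lemma count_tSeq (w : List Letter) (c : Letter) (hc : c = Letter.t ∨ c = Letter.T) :
    (tSeq w).count c = w.count c := by
  apply List.count_filter
  rcases hc with rfl | rfl <;> decide

lemma filter_prefix_exists {α : Type*} (P : α → Bool) :
    ∀ (w s : List α), s <+: w.filter P → ∃ u, u <+: w ∧ u.filter P = s := by
  intro w
  induction w with
  | nil =>
    intro s hs
    simp only [List.filter_nil, List.prefix_nil] at hs
    exact ⟨[], List.nil_prefix, by rw [hs]; rfl⟩
  | cons c w ih =>
    intro s hs
    by_cases hP : P c
    · rw [List.filter_cons_of_pos hP] at hs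
      cases s with
      | nil => exact ⟨[], List.nil_prefix, rfl⟩
      | cons d s' =>
        obtain ⟨ts, hts⟩ := hs
        obtain ⟨h1, h2⟩ := cons_inj' hts
        obtain ⟨u, hu, hfu⟩ := ih s' ⟨ts, h2⟩
        exact ⟨c :: u, List.cons_prefix_cons.mpr ⟨rfl, hu⟩, by rw [List.filter_cons_of_pos hP, hfu, h1]⟩
    · rw [List.filter_cons_of_neg hP] at hs
      obtain ⟨u, hu, hfu⟩ := ih s hs
      exact ⟨c :: u, List.cons_prefix_cons.mpr ⟨rfl, hu⟩, by rw [List.filter_cons_of_neg hP, hfu]⟩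

-- valley transfer
lemma isValley_of_tSeq_eq (w w' : List Letter) (h : tSeq w' = tSeq w) (hw : IsValley w) :
    IsValley w' := by
  constructor
  · intro u v huv
    have hpre : tSeq u <+: tSeq w := by
      rw [← h, huv, tSeq_append]
      exact ⟨tSeq v, rfl⟩
    obtain ⟨u₀, hu₀, hfu₀⟩ := filter_prefix_exists _ w (tSeq u) hpre
    obtain ⟨v₀, hv₀⟩ := hu₀
    have h1 := hw.1 u₀ v₀ hv₀.symm
    have e1 : u.count Letter.t = u₀.count Letter.t := by
      rw [← count_tSeq u _ (Or.inl rfl), ← count_tSeq u₀ _ (Or.inl rfl)]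
      exact (congrArg (List.count Letter.t) hfu₀).symm
    have e2 : u.count Letter.T = u₀.count Letter.T := by
      rw [← count_tSeq u _ (Or.inr rfl), ← count_tSeq u₀ _ (Or.inr rfl)]
      exact (congrArg (List.count Letter.T) hfu₀).symm
    omega
  · have e1 := count_tSeq w' Letter.t (Or.inl rfl)
    have e2 := count_tSeq w' Letter.T (Or.inr rfl)
    have e3 := count_tSeq w Letter.t (Or.inl rfl)
    have e4 := count_tSeq w Letter.T (Or.inr rfl)
    have := hw.2
    rw [← e1, ← e2, h, e3, e4]
    exact this

-- parsing
def consBlock (c : Letter) (P : List (ℤ × Bool) × ℤ) : List (ℤ × Bool) × ℤ :=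
  match c, P with
  | .t, P => ((0, true) :: P.1, P.2)
  | .T, P => ((0, false) :: P.1, P.2)
  | .a, ⟨[], γ⟩ => ([], γ + 1)
  | .a, ⟨(α, b) :: bs, γ⟩ => ((α + 1, b) :: bs, γ)
  | .A, ⟨[], γ⟩ => ([], γ - 1)
  | .A, ⟨(α, b) :: bs, γ⟩ => ((α - 1, b) :: bs, γ)

def parseW : List Letter → List (ℤ × Bool) × ℤ
  | [] => ([], 0)
  | c :: w => consBlock c (parseW w)

lemma reduced_tail {c : Letter} {w : List Letter} (h : Reduced (c :: w)) : Reduced w := by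
  refine ⟨fun u v hw => h.1 (c :: u) v ?_, fun u v hw => h.2 (c :: u) v ?_⟩ <;>
    rw [hw] <;> rfl

lemma parseW_correct : ∀ (w : List Letter), Reduced w → toW (parseW w).1 (parseW w).2 = w := by
  intro w
  induction w with
  | nil => intro _; rfl
  | cons c w ih =>
    intro hred
    have ihw := ih (reduced_tail hred)
    cases c with
    | t =>
      show toW ((0, true) :: (parseW w).1) (parseW w).2 = _
      rw [toW_cons]
      simp only [aPow_zero, List.nil_append]
      rw [ihw]
      rfl
    | T =>
      show toW ((0, false) :: (parseW w).1) (parseW w).2 = _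
      rw [toW_cons]
      simp only [aPow_zero, List.nil_append]
      rw [ihw]
      rfl
    | a =>
      rcases hpw : (parseW w).1 with _ | ⟨⟨α, b⟩, bs⟩
      · have hstep : parseW (Letter.a :: w) = ([], (parseW w).2 + 1) := by
          have h0 : parseW (Letter.a :: w) = consBlock Letter.a ((parseW w).1, (parseW w).2) :=
            rfl
          rw [h0, hpw]; rfl
        rw [hstep]
        show toW [] ((parseW w).2 + 1) = Letter.a :: w
        rw [hpw] at ihw
        rw [toW_nil] at ihw ⊢
        generalize hg : (parseW w).2 = γ0 at ihw ⊢
        subst ihw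
        have hnn : 0 ≤ γ0 := by
          by_contra hneg
          exact hred.1 [] (aPow (γ0 + 1))
            (by rw [aPow_neg_head (show γ0 < 0 by omega)]; rfl)
        rw [aPow_pos_head (show 0 < γ0 + 1 by omega), add_sub_cancel_right]
      · have hstep : parseW (Letter.a :: w) = ((α + 1, b) :: bs, (parseW w).2) := by
          have h0 : parseW (Letter.a :: w) = consBlock Letter.a ((parseW w).1, (parseW w).2) :=
            rfl
          rw [h0, hpw]; rfl
        rw [hstep]
        show toW ((α + 1, b) :: bs) ((parseW w).2) = Letter.a :: w
        rw [hpw] at ihw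
        rw [toW_cons] at ihw ⊢
        simp only at ihw ⊢
        generalize hg : (parseW w).2 = γ0 at ihw ⊢
        generalize hR : toW bs γ0 = R at ihw ⊢
        subst ihw
        have hnn : 0 ≤ α := by
          by_contra hneg
          exact hred.1 [] (aPow (α + 1) ++ ([tl b] ++ R))
            (by rw [aPow_neg_head (show α < 0 by omega)]; rfl)
        rw [aPow_pos_head (show 0 < α + 1 by omega), add_sub_cancel_right]
        rfl
    | A =>
      rcases hpw : (parseW w).1 with _ | ⟨⟨α, b⟩, bs⟩
      · have hstep : parseW (Letter.A :: w) = ([], (parseW w).2 - 1) := by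
          have h0 : parseW (Letter.A :: w) = consBlock Letter.A ((parseW w).1, (parseW w).2) :=
            rfl
          rw [h0, hpw]; rfl
        rw [hstep]
        show toW [] ((parseW w).2 - 1) = Letter.A :: w
        rw [hpw] at ihw
        rw [toW_nil] at ihw ⊢
        generalize hg : (parseW w).2 = γ0 at ihw ⊢
        subst ihw
        have hnn : γ0 ≤ 0 := by
          by_contra hneg
          exact hred.2 [] (aPow (γ0 - 1))
            (by rw [aPow_pos_head (show 0 < γ0 by omega)]; rfl)
        rw [aPow_neg_head (show γ0 - 1 < 0 by omega), sub_add_cancel]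
      · have hstep : parseW (Letter.A :: w) = ((α - 1, b) :: bs, (parseW w).2) := by
          have h0 : parseW (Letter.A :: w) = consBlock Letter.A ((parseW w).1, (parseW w).2) :=
            rfl
          rw [h0, hpw]; rfl
        rw [hstep]
        show toW ((α - 1, b) :: bs) ((parseW w).2) = Letter.A :: w
        rw [hpw] at ihw
        rw [toW_cons] at ihw ⊢
        simp only at ihw ⊢
        generalize hg : (parseW w).2 = γ0 at ihw ⊢
        generalize hR : toW bs γ0 = R at ihw ⊢
        subst ihw
        have hnn : α ≤ 0 := by
          by_contra hneg
          exact hred.2 [] (aPow (α - 1) ++ ([tl b] ++ R))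
            (by rw [aPow_pos_head (show 0 < α by omega)]; rfl)
        rw [aPow_neg_head (show α - 1 < 0 by omega), sub_add_cancel]
        rfl

lemma input_chainOK (p q : ℤ) (v : List Letter) (bs : List (ℤ × Bool)) (γ : ℤ)
    (hbr : BrittonReduced p q v) (hv : v = toW bs γ) : ChainOK p q none bs := by
  apply chainOK_none_intro
  intro bs₁ x y bs₂ hsp
  constructor
  · intro hx2 hy2 hdv
    obtain ⟨μ, hμ⟩ := hdv
    apply hbr.2.1 (blocksW bs₁ ++ aPow x.1) (blocksW bs₂ ++ aPow γ) μ
    rw [hv, hsp]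
    simp only [toW, blocksW_append, blocksW_cons, hx2, hy2, ← hμ, tl]
    simp [List.append_assoc]
  · intro hx2 hy2 hdv
    obtain ⟨μ, hμ⟩ := hdv
    apply hbr.2.2 (blocksW bs₁ ++ aPow x.1) (blocksW bs₂ ++ aPow γ) μ
    rw [hv, hsp]
    simp only [toW, blocksW_append, blocksW_cons, hx2, hy2, ← hμ, tl]
    simp [List.append_assoc]

theorem britton_reduced_valley_standard_form (p q : ℤ) (hp : 1 ≤ p) (hpq : p < q)
    (hdvd : p ∣ q) (v : List Letter) (hbr : BrittonReduced p q v) (hv : IsValley v) :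
    ∃ (V : List Letter) (γ : ℤ),
      IsStandardValley p q V ∧ eval p q v = eval p q (V ++ aPow γ) ∧
      BrittonReduced p q (V ++ aPow γ) := by
  have hvw : toW (parseW v).1 (parseW v).2 = v := parseW_correct v hbr.1
  set bs := (parseW v).1 with hbs
  set γv := (parseW v).2 with hγv
  have hch : ChainOK p q none bs := input_chainOK p q v bs γv hbr hvw.symm
  have hchout : ChainOK p q none (normB p q bs 0).1 :=
    normB_chainOK p q hp hpq hdvd bs 0 none (fun _ => dvd_zero p) (fun _ => dvd_zero q) hch
  set out := (normB p q bs 0).1 with hout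
  set cf := (normB p q bs 0).2 with hcf
  have hBRfull : BrittonReduced p q (toW out (cf + γv)) :=
    brittonReduced_toW p q out _ hchout
  have htoW : toW out (cf + γv) = blocksW out ++ aPow (cf + γv) := rfl
  have heval : eval p q v = eval p q (blocksW out ++ aPow (cf + γv)) := by
    have he := eval_normB p q hp hpq bs 0
    rw [zpow_zero, one_mul] at he
    calc eval p q v = eval p q (toW bs γv) := by rw [hvw]
    _ = eval p q (blocksW bs) * eval p q (aPow γv) := eval_append p q _ _
    _ = eval p q (blocksW out) * (PresentedGroup.of false : BS p q) ^ cf *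
          (PresentedGroup.of false : BS p q) ^ γv := by rw [he, eval_aPow]
    _ = eval p q (blocksW out) * (PresentedGroup.of false : BS p q) ^ (cf + γv) := by
          rw [mul_assoc, ← zpow_add]
    _ = eval p q (blocksW out ++ aPow (cf + γv)) := by rw [eval_append, eval_aPow]
  refine ⟨blocksW out, cf + γv, ⟨?_, ?_, ?_⟩, heval, htoW ▸ hBRfull⟩
  · exact brittonReduced_of_append p q _ _ (htoW ▸ hBRfull)
  · have htseq : tSeq (blocksW out) = tSeq v := by
      have h1 : tSeq (blocksW out) = out.map (fun x => tl x.2) := by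
        rw [show blocksW out = toW out 0 by simp [toW, aPow_zero], tSeq_toW]
      have h2 : tSeq v = bs.map (fun x => tl x.2) := by rw [← hvw, tSeq_toW]
      have h3 := normB_snd p q bs 0
      rw [h1, h2]
      calc out.map (fun x => tl x.2) = (out.map Prod.snd).map tl := by
            rw [List.map_map]; rfl
      _ = (bs.map Prod.snd).map tl := by rw [← hout] at h3; rw [h3]
      _ = bs.map (fun x => tl x.2) := by rw [List.map_map]; rfl
    exact isValley_of_tSeq_eq v _ htseq hv
  · refine ⟨out.length, fun i => (out.get i).1, fun i => tl (out.get i).2, ?_, ?_, ?_, ?_⟩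
    · intro i; cases (out.get i).2 <;> simp [tl]
    · rw [blocksW]
      congr 1
      conv_lhs => rw [← List.ofFn_get out]
      rw [List.map_ofFn]
      rfl
    · intro i
      have hb := normB_bounds p q hp hpq bs 0 (out.get i) (List.get_mem _ _)
      rw [abs_of_nonneg hb.1]
      exact hb.2.1
    · intro i hT
      have hb := normB_bounds p q hp hpq bs 0 (out.get i) (List.get_mem _ _)
      have hbf : (out.get i).2 = false := by
        cases h : (out.get i).2
        · rfl
        · simp only [h] at hT; exact absurd hT (by decide)
      rw [abs_of_nonneg hb.1]
      exact hb.2.2 hbf
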